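/- Let N ≥ 1, m ≥ 1, let u, u' : Fin m → (ZMod N → ZMod 4), and define the basic sequences s(t) = (1+i) · ∑_{k=0}^{m−1} 2^k · i^{u_k(t)} and s'(t) = (1+i) · ∑_{l=0}^{m−1} 2^l · i^{u'_l(t)}. Suppose θ_{u_k,u'_k}(0) = −1 for all k, and |θ_{u_k,u'_l}(0)| ≤ 1 + √(N+1) for all k ≠ l. Then |θ_{s,s'}(0)| ≤ 2·(2^m − 1)² + 2·((2/3)·4^m − 2^{m+1} + 4/3)·√(N+1). -/

import Mathlib

/-- For `a ∈ ZMod 4`, the complex number `i^a := Complex.I ^ a.val`. -/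
noncomputable def zi (a : ZMod 4) : ℂ := Complex.I ^ a.val

/-- Periodic correlation of complex sequences of period `N` at shift `τ`:
`θ_{s,s'}(τ) = ∑_t s(t+τ) · conj (s'(t))`. -/
noncomputable def pcorr {N : ℕ} [NeZero N] (s s' : ZMod N → ℂ) (τ : ZMod N) : ℂ :=
  ∑ t : ZMod N, s (t + τ) * (starRingEnd ℂ) (s' t)

/-- Periodic correlation of quaternary sequences of period `N` at shift `τ`:
`θ_{u,v}(τ) = ∑_t i^{u(t+τ)} · conj (i^{v(t)})`. -/
noncomputable def qcorr {N : ℕ} [NeZero N] (u v : ZMod N → ZMod 4) (τ : ZMod N) : ℂ :=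
  ∑ t : ZMod N, zi (u (t + τ)) * (starRingEnd ℂ) (zi (v t))

/-- Zero-shift correlation bound for basic sequences of the selected family
`SQ`: matched components have correlation exactly `-1` at shift zero and mismatched ones
are bounded by `1 + √(N+1)`; then
`|θ_{s,s'}(0)| ≤ 2(2^m - 1)² + 2((2/3)4^m - 2^{m+1} + 4/3)√(N+1)`. -/
theorem selected_family_zero_shift_bound (N m : ℕ) [NeZero N] (hm : 1 ≤ m)
    (u u' : Fin m → ZMod N → ZMod 4)
    (hdiag : ∀ k : Fin m, qcorr (u k) (u' k) 0 = -1)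
    (hoff : ∀ k l : Fin m, k ≠ l →
      ‖qcorr (u k) (u' l) 0‖ ≤ 1 + Real.sqrt (N + 1)) :
    ‖pcorr
      (fun t => (1 + Complex.I) * ∑ k : Fin m, (2 : ℂ) ^ (k : ℕ) * zi (u k t))
      (fun t => (1 + Complex.I) * ∑ l : Fin m, (2 : ℂ) ^ (l : ℕ) * zi (u' l t))
      0‖
    ≤ 2 * (2 ^ m - 1) ^ 2 +
      2 * ((2 / 3) * 4 ^ m - 2 ^ (m + 1) + 4 / 3) * Real.sqrt (N + 1) := by
  set R := Real.sqrt (N + 1) with hRdef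
  have hR : 0 ≤ R := Real.sqrt_nonneg _
  -- expansion
  have hexp : pcorr
      (fun t => (1 + Complex.I) * ∑ k : Fin m, (2 : ℂ) ^ (k : ℕ) * zi (u k t))
      (fun t => (1 + Complex.I) * ∑ l : Fin m, (2 : ℂ) ^ (l : ℕ) * zi (u' l t)) 0
      = 2 * ∑ k : Fin m, ∑ l : Fin m,
          (2 : ℂ) ^ (k : ℕ) * (2 : ℂ) ^ (l : ℕ) * qcorr (u k) (u' l) 0 := by
    unfold pcorr qcorr
    have key : ∀ t : ZMod N,
        ((1 + Complex.I) * ∑ k : Fin m, (2 : ℂ) ^ (k : ℕ) * zi (u k t)) *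
          (starRingEnd ℂ) ((1 + Complex.I) * ∑ l : Fin m, (2 : ℂ) ^ (l : ℕ) * zi (u' l t))
        = 2 * ∑ k : Fin m, ∑ l : Fin m,
            (2 : ℂ) ^ (k : ℕ) * (2 : ℂ) ^ (l : ℕ) *
              (zi (u k t) * (starRingEnd ℂ) (zi (u' l t))) := by
      intro t
      rw [map_mul, map_sum]
      have h2 : (1 + Complex.I) * (starRingEnd ℂ) (1 + Complex.I) = 2 := by
        simp only [map_add, map_one, Complex.conj_I]
        ring_nf
        rw [Complex.I_sq]; ring
      rw [mul_mul_mul_comm, h2, Finset.sum_mul_sum]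
      congr 1
      apply Finset.sum_congr rfl; intro k _
      apply Finset.sum_congr rfl; intro l _
      rw [map_mul, map_pow]
      simp only [Complex.conj_ofNat]
      ring
    calc (∑ t : ZMod N,
        ((1 + Complex.I) * ∑ k : Fin m, (2 : ℂ) ^ (k : ℕ) * zi (u k (t + 0))) *
          (starRingEnd ℂ) ((1 + Complex.I) * ∑ l : Fin m, (2 : ℂ) ^ (l : ℕ) * zi (u' l t)))
        = ∑ t : ZMod N, 2 * ∑ k : Fin m, ∑ l : Fin m,
            (2 : ℂ) ^ (k : ℕ) * (2 : ℂ) ^ (l : ℕ) *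
              (zi (u k t) * (starRingEnd ℂ) (zi (u' l t))) := by
          apply Finset.sum_congr rfl; intro t _
          simpa using key t
      _ = _ := by
          rw [← Finset.mul_sum]
          congr 1
          rw [Finset.sum_comm]
          apply Finset.sum_congr rfl; intro k _
          rw [Finset.sum_comm]
          apply Finset.sum_congr rfl; intro l _
          rw [Finset.mul_sum]
          apply Finset.sum_congr rfl; intro t _
          simp
  rw [hexp]
  -- split diagonal
  set f : Fin m → Fin m → ℂ :=
    fun k l => (2 : ℂ) ^ (k : ℕ) * (2 : ℂ) ^ (l : ℕ) * qcorr (u k) (u' l) 0 with hf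
  have hsplit : ∑ k : Fin m, ∑ l : Fin m, f k l
      = (∑ k : Fin m, f k k) + ∑ k : Fin m, ∑ l ∈ Finset.univ.erase k, f k l := by
    rw [← Finset.sum_add_distrib]
    apply Finset.sum_congr rfl; intro k _
    rw [Finset.add_sum_erase _ _ (Finset.mem_univ k)]
  have hdiagsum : ∑ k : Fin m, f k k = -((∑ k : Fin m, (4 : ℝ) ^ (k : ℕ) : ℝ) : ℂ) := by
    push_cast
    rw [← Finset.sum_neg_distrib]
    apply Finset.sum_congr rfl; intro k _
    show (2 : ℂ) ^ (k : ℕ) * (2 : ℂ) ^ (k : ℕ) * qcorr (u k) (u' k) 0 = -(4:ℂ)^(k:ℕ)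
    rw [hdiag k, show (4:ℂ) = 2*2 by norm_num, mul_pow]
    ring
  have habsdiag : ‖(∑ k : Fin m, f k k)‖ = ∑ k : Fin m, (4 : ℝ) ^ (k : ℕ) := by
    rw [hdiagsum, norm_neg, Complex.norm_real, Real.norm_eq_abs, abs_of_nonneg]
    positivity
  have habsoff : ‖(∑ k : Fin m, ∑ l ∈ Finset.univ.erase k, f k l)‖
      ≤ (∑ k : Fin m, ∑ l ∈ Finset.univ.erase k, (2:ℝ)^(k:ℕ) * (2:ℝ)^(l:ℕ)) * (1 + R) := by
    rw [Finset.sum_mul]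
    refine (norm_sum_le _ _).trans (Finset.sum_le_sum ?_)
    intro k _
    rw [Finset.sum_mul]
    refine (norm_sum_le _ _).trans (Finset.sum_le_sum ?_)
    intro l hl
    have hkl : k ≠ l := (Finset.ne_of_mem_erase hl).symm
    rw [hf]
    simp only [norm_mul, norm_pow]
    have : ‖(2:ℂ)‖ = 2 := by simp
    rw [this]
    have h1 : (0:ℝ) ≤ (2:ℝ)^(k:ℕ) * (2:ℝ)^(l:ℕ) := by positivity
    calc (2:ℝ)^(k:ℕ) * (2:ℝ)^(l:ℕ) * ‖(qcorr (u k) (u' l) 0)‖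
        ≤ (2:ℝ)^(k:ℕ) * (2:ℝ)^(l:ℕ) * (1 + R) := by
          apply mul_le_mul_of_nonneg_left (hoff k l hkl) h1
      _ = _ := by ring
  -- combine
  rw [hsplit, norm_mul]
  have h2abs : ‖(2:ℂ)‖ = 2 := by simp
  rw [h2abs]
  have htri : ‖((∑ k : Fin m, f k k) + ∑ k : Fin m, ∑ l ∈ Finset.univ.erase k, f k l)‖
      ≤ (∑ k : Fin m, (4 : ℝ) ^ (k : ℕ)) +
        (∑ k : Fin m, ∑ l ∈ Finset.univ.erase k, (2:ℝ)^(k:ℕ) * (2:ℝ)^(l:ℕ)) * (1 + R) := by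
    refine (norm_add_le _ _).trans ?_
    rw [habsdiag]
    exact add_le_add_right habsoff _
  -- arithmetic
  have hA : ∑ k : Fin m, (4 : ℝ) ^ (k : ℕ) = ((4:ℝ) ^ m - 1) / 3 := by
    rw [Fin.sum_univ_eq_sum_range, geom_sum_eq (by norm_num)]
    norm_num
  have hB : ∑ k : Fin m, (2 : ℝ) ^ (k : ℕ) = (2:ℝ) ^ m - 1 := by
    rw [Fin.sum_univ_eq_sum_range, geom_sum_eq (by norm_num)]
    norm_num
  have hE : ∑ k : Fin m, ∑ l ∈ Finset.univ.erase k, (2:ℝ)^(k:ℕ) * (2:ℝ)^(l:ℕ)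
      = ((2:ℝ)^m - 1)^2 - ((4:ℝ)^m - 1)/3 := by
    have hfull : ∑ k : Fin m, ∑ l : Fin m, (2:ℝ)^(k:ℕ) * (2:ℝ)^(l:ℕ)
        = ((2:ℝ)^m - 1)^2 := by
      rw [← Finset.sum_mul_sum, hB]; ring
    have hsplit' : ∑ k : Fin m, ∑ l : Fin m, (2:ℝ)^(k:ℕ) * (2:ℝ)^(l:ℕ)
        = (∑ k : Fin m, (2:ℝ)^(k:ℕ) * (2:ℝ)^(k:ℕ)) +
          ∑ k : Fin m, ∑ l ∈ Finset.univ.erase k, (2:ℝ)^(k:ℕ) * (2:ℝ)^(l:ℕ) := by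
      rw [← Finset.sum_add_distrib]
      apply Finset.sum_congr rfl; intro k _
      exact (Finset.add_sum_erase _ (fun l : Fin m => (2:ℝ)^(k:ℕ) * (2:ℝ)^(l:ℕ))
        (Finset.mem_univ k)).symm
    have hdd : ∑ k : Fin m, (2:ℝ)^(k:ℕ) * (2:ℝ)^(k:ℕ) = ((4:ℝ)^m - 1)/3 := by
      rw [← hA]
      apply Finset.sum_congr rfl; intro k _
      rw [show (4:ℝ) = 2*2 by norm_num, mul_pow]
    linarith [hfull, hsplit', hdd]
  have h4 : (4:ℝ)^m = ((2:ℝ)^m)^2 := by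
    rw [← pow_mul, show (4:ℝ) = 2^2 by norm_num, ← pow_mul]; ring_nf
  have h2m1 : (2:ℝ)^(m+1) = 2 * (2:ℝ)^m := by ring
  calc 2 * ‖((∑ k : Fin m, f k k) + ∑ k : Fin m, ∑ l ∈ Finset.univ.erase k, f k l)‖
      ≤ 2 * (((4:ℝ)^m - 1)/3 + (((2:ℝ)^m - 1)^2 - ((4:ℝ)^m - 1)/3) * (1 + R)) := by
        rw [← hE, ← hA]
        exact mul_le_mul_of_nonneg_left htri (by norm_num)
    _ = 2 * ((2:ℝ) ^ m - 1) ^ 2 +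
      2 * ((2 / 3) * (4:ℝ) ^ m - (2:ℝ) ^ (m + 1) + 4 / 3) * R := by
        rw [h4, h2m1]; ring
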